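/- arXiv:1805.07456 — 2 statements merged into one kernel-verified Lean document; each statement's English description precedes it below -/
import Mathlib

section
/- Let L be the Laplacian of a connected undirected graph on N ≥ 2 nodes, and let β, δ > 0 be such that β δ λ < 1 for every nonzero eigenvalue λ of L. Set H = −β Rᵀ L R ∈ ℝ^{(N−1)×(N−1)}. Then the delay difference equation with one step of delay, p(k+1) = p(k) + δ H p(k−1), is exponentially stable. -/
open Matrix Filter

/-- `A` is a nonnegative weighted adjacency matrix with zero diagonal. -/
def IsAdjacencyMatrix {N : ℕ} (A : Matrix (Fin N) (Fin N) ℝ) : Prop :=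
  (∀ i j, 0 ≤ A i j) ∧ ∀ i, A i i = 0

/-- `L` is the out-Laplacian of the weighted digraph with adjacency matrix `A`:
`L i i = ∑ j, A i j` and `L i j = -A i j` for `i ≠ j`. -/
def IsOutLaplacian {N : ℕ} (A L : Matrix (Fin N) (Fin N) ℝ) : Prop :=
  (∀ i, L i i = ∑ j, A i j) ∧ ∀ i j, i ≠ j → L i j = -A i j

/-- Strong connectivity: there is a directed edge from `u` to `v` iff `A v u > 0`, and any
ordered pair of distinct nodes is joined by a directed path. -/
def IsStronglyConnected {N : ℕ} (A : Matrix (Fin N) (Fin N) ℝ) : Prop :=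
  ∀ i j : Fin N, i ≠ j → Relation.TransGen (fun u v => 0 < A v u) i j

/-- Weight-balanced: the column sums of the out-Laplacian vanish, i.e. `1ᵀ L = 0`. -/
def IsWeightBalanced {N : ℕ} (L : Matrix (Fin N) (Fin N) ℝ) : Prop :=
  ∀ j, ∑ i, L i j = 0

/-- The all-ones vector `1_N`. -/
noncomputable def ones (N : ℕ) : EuclideanSpace ℝ (Fin N) := WithLp.toLp 2 (fun _ => 1)

/-- The average `(1/N) ∑ j v j` of the entries of a vector. -/
noncomputable def avg {N : ℕ} (v : EuclideanSpace ℝ (Fin N)) : ℝ := (∑ j, v j) / N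

/-- The projection `Π_N v = v - avg(v) • 1_N` onto the orthogonal complement of `1_N`. -/
noncomputable def proj {N : ℕ} (v : EuclideanSpace ℝ (Fin N)) : EuclideanSpace ℝ (Fin N) :=
  v - avg v • ones N

/-- A solution of the delay difference equation `x(k+1) = x(k) + M x(k-d)`:
a function on `{k : ℤ | k ≥ -d}` (here on all of `ℤ`) satisfying the recursion for `k ≥ 0`. -/
def IsDDSolution {n : ℕ} (M : Matrix (Fin n) (Fin n) ℝ) (d : ℕ)
    (x : ℤ → EuclideanSpace ℝ (Fin n)) : Prop :=
  ∀ k : ℤ, 0 ≤ k → x (k + 1) = x k + Matrix.toEuclideanLin M (x (k - d))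

/-- Exponential stability of `x(k+1) = x(k) + M x(k-d)`: uniform geometric decay bound in
terms of the maximum of the solution over `{-d, …, 0}`. -/
def DDExpStable {n : ℕ} (M : Matrix (Fin n) (Fin n) ℝ) (d : ℕ) : Prop :=
  ∃ c > (0:ℝ), ∃ ω ∈ Set.Ioo (0:ℝ) 1, ∀ x, IsDDSolution M d x → ∀ k : ℤ, 0 ≤ k →
    ‖x k‖ ≤ c * ω ^ k *
      (Finset.Icc (-(d:ℤ)) 0).sup' (Finset.nonempty_Icc.mpr (by omega)) (fun j => ‖x j‖)

section AuxLap

open scoped NNReal ENNReal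

variable {N : ℕ} {A L : Matrix (Fin N) (Fin N) ℝ}

lemma lap_entry (hA : IsAdjacencyMatrix A) (hL : IsOutLaplacian A L) (i j : Fin N) :
    L i j = (if i = j then ∑ k, A i k else 0) - A i j := by
  by_cases h : i = j
  · subst h; simp [hL.1 i, hA.2 i]
  · simp [h, hL.2 i j h]

lemma lap_quadform (hA : IsAdjacencyMatrix A) (hL : IsOutLaplacian A L) (hSym : Aᵀ = A)
    (x : Fin N → ℝ) :
    x ⬝ᵥ (L *ᵥ x) = (∑ i, ∑ j, A i j * (x i - x j)^2) / 2 := by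
  have hsym : ∀ i j, A i j = A j i := fun i j => (congrFun (congrFun hSym i) j).symm
  have E1 : x ⬝ᵥ (L *ᵥ x)
      = (∑ i, ∑ j, A i j * x i ^ 2) - ∑ i, ∑ j, A i j * (x i * x j) := by
    rw [dotProduct, ← Finset.sum_sub_distrib]
    refine Finset.sum_congr rfl fun i _ => ?_
    have h1 : x i * (L *ᵥ x) i = ∑ j, ((if i = j then (∑ k, A i k) else 0) * (x i * x j)
        - A i j * (x i * x j)) := by
      simp only [mulVec, dotProduct, Finset.mul_sum]
      refine Finset.sum_congr rfl fun j _ => ?_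
      rw [lap_entry hA hL i j]
      by_cases h : i = j <;> simp [h] <;> ring
    rw [h1, Finset.sum_sub_distrib]
    simp only [ite_mul, zero_mul, Finset.sum_ite_eq, if_pos (Finset.mem_univ _),
      Finset.sum_mul]
    congr 1
    refine Finset.sum_congr rfl fun k _ => by ring
  have E2 : (∑ i, ∑ j, A i j * (x i - x j)^2)
      = (∑ i, ∑ j, A i j * x i ^ 2) - 2 * (∑ i, ∑ j, A i j * (x i * x j))
        + (∑ i, ∑ j, A i j * x j ^ 2) := by
    have h2 : ∀ i j : Fin N, A i j * (x i - x j)^2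
        = A i j * x i ^ 2 - 2 * (A i j * (x i * x j)) + A i j * x j ^ 2 := fun i j => by ring
    simp only [h2, Finset.sum_add_distrib, Finset.sum_sub_distrib, ← Finset.mul_sum]
  have E3 : (∑ i, ∑ j, A i j * x j ^ 2) = ∑ i, ∑ j, A i j * x i ^ 2 := by
    rw [Finset.sum_comm]
    exact Finset.sum_congr rfl fun i _ => Finset.sum_congr rfl fun j _ => by rw [hsym j i]
  linarith

lemma lap_psd (hA : IsAdjacencyMatrix A) (hL : IsOutLaplacian A L) (hSym : Aᵀ = A)
    (x : Fin N → ℝ) : 0 ≤ x ⬝ᵥ (L *ᵥ x) := by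
  rw [lap_quadform hA hL hSym x]
  apply div_nonneg _ (by norm_num)
  exact Finset.sum_nonneg fun i _ => Finset.sum_nonneg fun j _ =>
    mul_nonneg (hA.1 i j) (sq_nonneg _)

lemma lap_const (hA : IsAdjacencyMatrix A) (hL : IsOutLaplacian A L) (hSym : Aᵀ = A)
    (hConn : ∀ i j : Fin N, i ≠ j → Relation.TransGen (fun u v => 0 < A u v) i j)
    (x : Fin N → ℝ) (hx : x ⬝ᵥ (L *ᵥ x) = 0) : ∀ i j, x i = x j := by
  rw [lap_quadform hA hL hSym x] at hx
  have hz : ∀ i ∈ Finset.univ, ∀ j ∈ Finset.univ, A i j * (x i - x j)^2 = 0 := by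
    have h := (Finset.sum_eq_zero_iff_of_nonneg (fun i _ =>
      Finset.sum_nonneg fun j _ => mul_nonneg (hA.1 i j) (sq_nonneg _))).mp (by linarith)
    intro i hi j hj
    exact (Finset.sum_eq_zero_iff_of_nonneg (fun j _ =>
      mul_nonneg (hA.1 i j) (sq_nonneg _))).mp (h i hi) j hj
  have hedge : ∀ i j : Fin N, 0 < A i j → x i = x j := by
    intro i j hij
    have := hz i (Finset.mem_univ i) j (Finset.mem_univ j)
    have h2 : (x i - x j)^2 = 0 := by
      rcases mul_eq_zero.mp this with h | h
      · exact absurd h (ne_of_gt hij)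
      · exact h
    have := pow_eq_zero_iff (n := 2) (by norm_num) |>.mp h2
    linarith
  have key : ∀ a b, Relation.TransGen (fun u v => 0 < A u v) a b → x a = x b := by
    intro a b hab
    induction hab with
    | single h' => exact hedge _ _ h'
    | tail _ h' ih => exact ih.trans (hedge _ _ h')
  intro i j
  by_cases h : i = j
  · rw [h]
  · exact key i j (hConn i j h)

lemma lap_colsum (hA : IsAdjacencyMatrix A) (hL : IsOutLaplacian A L) (hSym : Aᵀ = A)
    (j : Fin N) : ∑ i, L i j = 0 := by
  have hsym : ∀ i j, A i j = A j i := fun i j => (congrFun (congrFun hSym i) j).symm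
  have hLs : ∀ i, L i j = L j i := by
    intro i
    rw [lap_entry hA hL i j, lap_entry hA hL j i]
    by_cases h : i = j
    · subst h; rfl
    · simp [h, Ne.symm h, hsym i j]
  simp only [hLs]
  simp only [lap_entry hA hL j]
  rw [Finset.sum_sub_distrib, Finset.sum_ite_eq, if_pos (Finset.mem_univ j), sub_eq_zero]

lemma RRt_entry (hN : 2 ≤ N) (R : Matrix (Fin N) (Fin (N-1)) ℝ)
    (hR1 : Rᵀ * R = 1) (hR2 : Rᵀ.mulVec (fun _ => (1:ℝ)) = 0) (i i' : Fin N) :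
    (R * Rᵀ) i i' = (if i = i' then 1 else 0) - 1/N := by
  have hNpos : (0:ℝ) < N := by positivity
  have hNR : Real.sqrt N ≠ 0 := by positivity
  set B : Matrix (Fin N) (Fin 1 ⊕ Fin (N-1)) ℝ :=
    Matrix.of (fun i k => Sum.elim (fun _ => (Real.sqrt N)⁻¹) (fun j => R i j) k) with hB
  have hcol : ∀ j, ∑ i, R i j = 0 := by
    intro j
    have := congrFun hR2 j
    simpa [mulVec, dotProduct] using this
  have hBtB : Bᵀ * B = 1 := by
    ext k k'
    rw [mul_apply]
    simp only [transpose_apply, hB, of_apply]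
    cases k with
    | inl a =>
      cases k' with
      | inl b =>
        have hab : a = b := Subsingleton.elim a b
        subst hab
        simp only [Sum.elim_inl, one_apply_eq]
        rw [Finset.sum_const, Finset.card_univ, Fintype.card_fin, nsmul_eq_mul, ← mul_inv,
          Real.mul_self_sqrt hNpos.le]
        field_simp
      | inr b =>
        simp only [Sum.elim_inl, Sum.elim_inr]
        rw [← Finset.mul_sum, hcol b, mul_zero]
        symm
        simp [one_apply]
    | inr a =>
      cases k' with
      | inl b =>
        simp only [Sum.elim_inl, Sum.elim_inr]
        rw [← Finset.sum_mul, hcol a, zero_mul]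
        symm
        simp [one_apply]
      | inr b =>
        simp only [Sum.elim_inr]
        have h1 := congrFun (congrFun hR1 a) b
        rw [mul_apply] at h1
        simp only [transpose_apply] at h1
        rw [h1]
        simp [one_apply]
  have hN1 : N = 1 + (N - 1) := by omega
  let e : Fin N ≃ Fin 1 ⊕ Fin (N - 1) := (finCongr hN1).trans finSumFinEquiv.symm
  let O : Matrix (Fin N) (Fin N) ℝ := B.submatrix id e
  have hOtO : Oᵀ * O = 1 := by
    ext k k'
    have h1 : (Oᵀ * O) k k' = (Bᵀ * B) (e k) (e k') := by
      simp [O, mul_apply, submatrix_apply]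
    rw [h1, hBtB, one_apply, one_apply]
    simp [EmbeddingLike.apply_eq_iff_eq]
  have hOOt : O * Oᵀ = 1 := mul_eq_one_comm.mp hOtO
  have h2 : (O * Oᵀ) i i' = 1/N + (R * Rᵀ) i i' := by
    have h3 : (O * Oᵀ) i i' = ∑ k, B i (e k) * B i' (e k) := by
      simp [O, mul_apply, submatrix_apply]
    rw [h3, Equiv.sum_comp e (fun k' => B i k' * B i' k')]
    rw [Fintype.sum_sum_type]
    simp [hB, mul_apply, ← mul_inv, Real.mul_self_sqrt (le_of_lt hNpos), one_div]
  rw [hOOt, one_apply] at h2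
  linarith [h2]

lemma key_identity (hN : 2 ≤ N) (hA : IsAdjacencyMatrix A) (hL : IsOutLaplacian A L)
    (hSym : Aᵀ = A) (R : Matrix (Fin N) (Fin (N-1)) ℝ)
    (hR1 : Rᵀ * R = 1) (hR2 : Rᵀ.mulVec (fun _ => (1:ℝ)) = 0) :
    R * (Rᵀ * L * R) = L * R := by
  have h1 : (R * Rᵀ) * L = L := by
    ext i j
    rw [mul_apply]
    simp only [RRt_entry hN R hR1 hR2 i, sub_mul, ite_mul, one_mul, zero_mul]
    rw [Finset.sum_sub_distrib, Finset.sum_ite_eq, if_pos (Finset.mem_univ i)]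
    have : ∑ k, 1/(N:ℝ) * L k j = 1/(N:ℝ) * ∑ k, L k j := by rw [Finset.mul_sum]
    rw [show (fun k => 1/(N:ℝ) * L k j) = fun k => 1/(N:ℝ) * L k j from rfl] at this ⊢
    rw [this, lap_colsum hA hL hSym j, mul_zero, sub_zero]
  calc R * (Rᵀ * L * R) = ((R * Rᵀ) * L) * R := by
        rw [Matrix.mul_assoc (R * Rᵀ) L R, Matrix.mul_assoc R Rᵀ (L * R),
          ← Matrix.mul_assoc Rᵀ L R]
    _ = L * R := by rw [h1]

lemma eig_transfer (hN : 2 ≤ N) (hA : IsAdjacencyMatrix A) (hL : IsOutLaplacian A L)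
    (hSym : Aᵀ = A)
    (hConn : ∀ i j : Fin N, i ≠ j → Relation.TransGen (fun u v => 0 < A u v) i j)
    (R : Matrix (Fin N) (Fin (N-1)) ℝ)
    (hR1 : Rᵀ * R = 1) (hR2 : Rᵀ.mulVec (fun _ => (1:ℝ)) = 0)
    (ν : ℝ) (w : Fin (N-1) → ℝ) (hw : w ≠ 0)
    (heig : (Rᵀ * L * R) *ᵥ w = ν • w) : ν ∈ spectrum ℝ L ∧ 0 < ν := by
  set v : Fin N → ℝ := R *ᵥ w with hv
  have hRtv : Rᵀ *ᵥ v = w := by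
    rw [hv, mulVec_mulVec, hR1, one_mulVec]
  have hvne : v ≠ 0 := by
    intro h
    rw [h, mulVec_zero] at hRtv
    exact hw hRtv.symm
  have hLv : L *ᵥ v = ν • v := by
    rw [hv, mulVec_mulVec, ← key_identity hN hA hL hSym R hR1 hR2, ← mulVec_mulVec,
      heig, mulVec_smul]
  constructor
  · rw [spectrum.mem_iff]
    intro hunit
    have hdet : ((algebraMap ℝ (Matrix (Fin N) (Fin N) ℝ)) ν - L).det ≠ 0 := by
      intro h0
      have := ((Matrix.isUnit_iff_isUnit_det _).mp hunit)
      rw [h0] at this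
      exact (by simpa using this : False)
    have : ∃ u : Fin N → ℝ, u ≠ 0 ∧ ((algebraMap ℝ (Matrix (Fin N) (Fin N) ℝ)) ν - L) *ᵥ u = 0 := by
      refine ⟨v, hvne, ?_⟩
      rw [sub_mulVec, hLv]
      have : (algebraMap ℝ (Matrix (Fin N) (Fin N) ℝ)) ν *ᵥ v = ν • v := by
        rw [Algebra.algebraMap_eq_smul_one, smul_mulVec, one_mulVec]
      rw [this, sub_self]
    obtain ⟨u, hu, hu0⟩ := this
    exact hdet ((Matrix.exists_mulVec_eq_zero_iff).mp ⟨u, hu, hu0⟩)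
  · have hs : 0 < w ⬝ᵥ w := by
      have : 0 ≤ w ⬝ᵥ w := Finset.sum_nonneg fun i _ => mul_self_nonneg _
      rcases lt_or_eq_of_le this with h | h
      · exact h
      · exact absurd (dotProduct_self_eq_zero.mp h.symm) hw
    have hq : w ⬝ᵥ ((Rᵀ * L * R) *ᵥ w) = ν * (w ⬝ᵥ w) := by
      rw [heig, dotProduct_smul]; rfl
    have hq2 : w ⬝ᵥ ((Rᵀ * L * R) *ᵥ w) = v ⬝ᵥ (L *ᵥ v) := by
      rw [Matrix.mul_assoc, ← mulVec_mulVec, dotProduct_mulVec, vecMul_transpose, ← hv,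
        mulVec_mulVec]
    have hpsd := lap_psd hA hL hSym v
    have hν0 : 0 ≤ ν := by nlinarith [hq.symm.trans hq2]
    rcases lt_or_eq_of_le hν0 with h | h
    · exact h
    · exfalso
      have hq0 : v ⬝ᵥ (L *ᵥ v) = 0 := by rw [← hq2, hq, ← h]; ring
      have hconst := lap_const hA hL hSym hConn v hq0
      set i0 : Fin N := ⟨0, by omega⟩
      have hvc : v = (v i0) • (fun _ => (1:ℝ)) := by
        funext i
        simp [hconst i i0]
      have : w = Rᵀ *ᵥ ((v i0) • (fun _ => (1:ℝ))) := by rw [← hvc, hRtv]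
      rw [mulVec_smul, hR2, smul_zero] at this
      exact hw this

end AuxLap

lemma herm_eig_real {m : Type*} [Fintype m] [DecidableEq m] (S : Matrix m m ℝ) (hS : Sᵀ = S)
    (μ : ℂ) (v : m → ℂ) (hv : v ≠ 0)
    (heig : (S.map Complex.ofReal) *ᵥ v = μ • v) :
    μ.im = 0 ∧ ∃ w : m → ℝ, w ≠ 0 ∧ S *ᵥ w = μ.re • w := by
  have hsymm : ∀ i j, S i j = S j i := fun i j => (congrFun (congrFun hS i) j).symm
  have hcomp : ∀ i, ∑ j, (S i j : ℂ) * v j = μ * v i := by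
    intro i
    have := congrFun heig i
    simpa [mulVec, dotProduct, Matrix.map_apply] using this
  -- μ is real
  have him : μ.im = 0 := by
    set s : ℂ := ∑ i, (starRingEnd ℂ) (v i) * v i with hs
    have hsreal : s = ((∑ i, Complex.normSq (v i) : ℝ) : ℂ) := by
      rw [hs]
      push_cast
      refine Finset.sum_congr rfl fun i _ => ?_
      rw [mul_comm, Complex.mul_conj]
    have hspos : 0 < ∑ i, Complex.normSq (v i) := by
      obtain ⟨i, hi⟩ := Function.ne_iff.mp hv
      exact Finset.sum_pos' (fun j _ => Complex.normSq_nonneg _)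
        ⟨i, Finset.mem_univ i, Complex.normSq_pos.mpr hi⟩
    set q : ℂ := ∑ i, (starRingEnd ℂ) (v i) * (μ * v i) with hq
    have hq1 : q = μ * s := by
      rw [hq, hs, Finset.mul_sum]
      exact Finset.sum_congr rfl fun i _ => by ring
    have hq2 : q = ∑ i, ∑ j, (starRingEnd ℂ) (v i) * ((S i j : ℂ) * v j) := by
      rw [hq]
      refine Finset.sum_congr rfl fun i _ => ?_
      rw [← hcomp i, Finset.mul_sum]
    have hqconj : (starRingEnd ℂ) q = q := by
      rw [hq2, map_sum]
      rw [show (∑ i, ∑ j, (starRingEnd ℂ) (v i) * ((S i j : ℂ) * v j))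
          = ∑ j, ∑ i, (starRingEnd ℂ) (v i) * ((S i j : ℂ) * v j) from Finset.sum_comm]
      refine Finset.sum_congr rfl fun i _ => ?_
      rw [map_sum]
      refine Finset.sum_congr rfl fun j _ => ?_
      simp only [_root_.map_mul, RingHomCompTriple.comp_apply, RingHom.id_apply,
        Complex.conj_conj, Complex.conj_ofReal]
      rw [hsymm i j]
      ring
    have hsne : s ≠ 0 := by
      rw [hsreal]
      exact_mod_cast ne_of_gt (by exact_mod_cast hspos)
    have hμconj : (starRingEnd ℂ) μ = μ := by
      have h1 : (starRingEnd ℂ) μ * s = μ * s := by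
        have := hqconj
        rw [hq1, _root_.map_mul] at this
        rw [hsreal] at this ⊢
        rw [Complex.conj_ofReal] at this
        rw [← hsreal] at this ⊢
        exact this
      exact mul_right_cancel₀ hsne h1
    have := Complex.conj_eq_iff_im.mp hμconj
    exact this
  -- real eigenvector
  have hre : ∀ i, ∑ j, S i j * (v j).re = μ.re * (v i).re := by
    intro i
    have := congrArg Complex.re (hcomp i)
    simpa [Complex.re_sum, Complex.mul_re, Complex.ofReal_re, Complex.ofReal_im, him]
      using this
  have him2 : ∀ i, ∑ j, S i j * (v j).im = μ.re * (v i).im := by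
    intro i
    have := congrArg Complex.im (hcomp i)
    simpa [Complex.im_sum, Complex.mul_im, Complex.ofReal_re, Complex.ofReal_im, him]
      using this
  refine ⟨him, ?_⟩
  by_cases hwr : (fun i => (v i).re) = 0
  · refine ⟨fun i => (v i).im, ?_, ?_⟩
    · intro h0
      apply hv
      funext i
      have h1 := congrFun hwr i
      have h2 := congrFun h0 i
      simp only [Pi.zero_apply] at h1 h2
      exact Complex.ext h1 h2
    · funext i
      simp only [mulVec, dotProduct, Pi.smul_apply, smul_eq_mul]
      exact him2 i
  · refine ⟨fun i => (v i).re, hwr, ?_⟩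
    funext i
    simp only [mulVec, dotProduct, Pi.smul_apply, smul_eq_mul]
    exact hre i

lemma quad_root_abs {z : ℂ} {m : ℝ} (hm1 : -1 < m) (hm0 : m < 0)
    (h : z^2 - z = (m:ℂ)) : ‖z‖ < 1 := by
  by_cases him : z.im = 0
  · have hz : z = (z.re : ℂ) := Complex.ext rfl (by simp [him])
    set t := z.re with ht
    rw [hz] at h
    have ht2 : t^2 - t = m := by exact_mod_cast h
    rw [hz, Complex.norm_real, Real.norm_eq_abs, abs_lt]
    constructor <;> nlinarith
  · have hc : (starRingEnd ℂ) z ^ 2 - (starRingEnd ℂ) z = (m:ℂ) := by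
      have := congrArg (starRingEnd ℂ) h
      simpa [map_sub, map_pow, Complex.conj_ofReal] using this
    have hfac : ((starRingEnd ℂ) z - z) * ((starRingEnd ℂ) z + z - 1) = 0 := by
      linear_combination hc - h
    have hne : (starRingEnd ℂ) z - z ≠ 0 := by
      rw [sub_ne_zero]
      intro heq
      exact him (Complex.conj_eq_iff_im.mp heq)
    have hsum : (starRingEnd ℂ) z = 1 - z := by
      rcases mul_eq_zero.mp hfac with h' | h'
      · exact absurd h' hne
      · linear_combination h'
    have hns : (Complex.normSq z : ℂ) = ((-m : ℝ) : ℂ) := by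
      rw [← Complex.mul_conj, hsum]
      push_cast
      linear_combination -h
    have hns2 : Complex.normSq z = -m := by exact_mod_cast hns
    have := Complex.sq_norm z
    nlinarith [norm_nonneg z]

section AuxGelfand

open scoped NNReal ENNReal

attribute [local instance] Matrix.linftyOpNormedRing Matrix.linftyOpNormedAlgebra

lemma pow_bound {ι : Type*} [Fintype ι] [DecidableEq ι] [Nonempty ι] (M : Matrix ι ι ℂ)
    (h : ∀ z ∈ spectrum ℂ M, ‖z‖ < 1) :
    ∃ c : ℝ, 0 < c ∧ ∃ ω : ℝ, ω ∈ Set.Ioo (0:ℝ) 1 ∧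
      ∀ (k : ℕ) i j, ‖(M ^ k) i j‖ ≤ c * ω ^ k := by
  haveI : CompleteSpace (Matrix ι ι ℂ) := FiniteDimensional.complete ℂ _
  obtain ⟨z₀, hz₀mem, hz₀⟩ := spectrum.exists_nnnorm_eq_spectralRadius M
  have hz01 : ‖z₀‖₊ < 1 := by
    rw [← NNReal.coe_lt_coe]
    simpa [coe_nnnorm] using h z₀ hz₀mem
  set r : ℝ≥0 := (‖z₀‖₊ + 1) / 2 with hr
  have hzr : ‖z₀‖₊ < r := by
    rw [← NNReal.coe_lt_coe] at *
    push_cast [hr]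
    push_cast at hz01
    linarith
  have hr1 : r < 1 := by
    rw [← NNReal.coe_lt_coe] at *
    push_cast [hr]
    push_cast at hz01
    linarith
  have hrpos : 0 < r := by
    rw [← NNReal.coe_lt_coe]
    push_cast [hr]
    positivity
  have hrad : spectralRadius ℂ M < (r : ℝ≥0∞) := by
    rw [← hz₀]
    exact_mod_cast hzr
  have hT := spectrum.pow_nnnorm_pow_one_div_tendsto_nhds_spectralRadius M
  obtain ⟨n₀, hn₀⟩ := Filter.eventually_atTop.mp (hT.eventually_lt_const hrad)
  have key : ∀ n, max n₀ 1 ≤ n → ‖M ^ n‖ ≤ (r:ℝ)^n := by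
    intro n hn
    have hn1 : 1 ≤ n := le_trans (le_max_right _ _) hn
    have h1 : (‖M ^ n‖₊ : ℝ≥0∞) ^ (1/(n:ℝ)) < (r:ℝ≥0∞) := hn₀ n (le_trans (le_max_left _ _) hn)
    have hnne : (n:ℝ) ≠ 0 := Nat.cast_ne_zero.mpr (by omega)
    have h2 : ((‖M ^ n‖₊ : ℝ≥0∞) ^ (1/(n:ℝ))) ^ (n:ℝ) ≤ (r:ℝ≥0∞) ^ (n:ℝ) :=
      ENNReal.rpow_le_rpow h1.le (by positivity)
    rw [← ENNReal.rpow_mul, one_div, inv_mul_cancel₀ hnne, ENNReal.rpow_one] at h2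
    rw [ENNReal.rpow_natCast, ← ENNReal.coe_pow, ENNReal.coe_le_coe] at h2
    have := NNReal.coe_le_coe.mpr h2
    rw [NNReal.coe_pow] at this
    exact this
  set n₁ := max n₀ 1 with hn₁
  set c : ℝ := 1 + ∑ m ∈ Finset.range n₁, ‖M ^ m‖ / (r:ℝ)^m with hc
  have hrR : (0:ℝ) < (r:ℝ) := hrpos
  have hcpos : 0 < c := by
    rw [hc]
    have : 0 ≤ ∑ m ∈ Finset.range n₁, ‖M ^ m‖ / (r:ℝ)^m :=
      Finset.sum_nonneg fun m _ => div_nonneg (norm_nonneg _) (by positivity)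
    linarith
  have hnorm : ∀ k : ℕ, ‖M ^ k‖ ≤ c * (r:ℝ)^k := by
    intro k
    by_cases hk : n₁ ≤ k
    · have := key k hk
      have h3 : (1:ℝ) * (r:ℝ)^k ≤ c * (r:ℝ)^k := by
        apply mul_le_mul_of_nonneg_right _ (by positivity)
        rw [hc]
        have : 0 ≤ ∑ m ∈ Finset.range n₁, ‖M ^ m‖ / (r:ℝ)^m :=
          Finset.sum_nonneg fun m _ => div_nonneg (norm_nonneg _) (by positivity)
        linarith
      linarith
    · push_neg at hk
      have hmem : k ∈ Finset.range n₁ := Finset.mem_range.mpr hk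
      have h4 : ‖M ^ k‖ / (r:ℝ)^k ≤ ∑ m ∈ Finset.range n₁, ‖M ^ m‖ / (r:ℝ)^m :=
        Finset.single_le_sum (fun m _ => div_nonneg (norm_nonneg _) (by positivity)) hmem
      have h5 : ‖M ^ k‖ / (r:ℝ)^k ≤ c := by rw [hc]; linarith
      calc ‖M ^ k‖ = (‖M ^ k‖ / (r:ℝ)^k) * (r:ℝ)^k := by field_simp
        _ ≤ c * (r:ℝ)^k := mul_le_mul_of_nonneg_right h5 (by positivity)
  refine ⟨c, hcpos, (r:ℝ), ⟨hrR, by exact_mod_cast hr1⟩, ?_⟩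
  intro k i j
  have hent : ‖(M ^ k) i j‖₊ ≤ ‖M ^ k‖₊ := by
    rw [Matrix.linfty_opNNNorm_def]
    calc ‖(M ^ k) i j‖₊ ≤ ∑ j', ‖(M ^ k) i j'‖₊ :=
          Finset.single_le_sum (f := fun j' => ‖(M ^ k) i j'‖₊) (fun _ _ => zero_le)
            (Finset.mem_univ j)
      _ ≤ _ := Finset.le_sup (f := fun i => ∑ j', ‖(M ^ k) i j'‖₊) (Finset.mem_univ i)
  have : ‖(M ^ k) i j‖ ≤ ‖M ^ k‖ := by
    have := NNReal.coe_le_coe.mpr hent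
    simpa [coe_nnnorm] using this
  exact this.trans (hnorm k)

end AuxGelfand

lemma abs_le_euclid {n : ℕ} (y : EuclideanSpace ℝ (Fin n)) (i : Fin n) : |y i| ≤ ‖y‖ := by
  rw [EuclideanSpace.norm_eq]
  have h1 : |y i| = Real.sqrt (|y i|^2) := by
    rw [Real.sqrt_sq_eq_abs, abs_abs]
  rw [h1]
  apply Real.sqrt_le_sqrt
  rw [sq_abs]
  calc y i ^ 2 = ‖y i‖^2 := by rw [Real.norm_eq_abs, sq_abs]
    _ ≤ ∑ j, ‖y j‖^2 := Finset.single_le_sum (f := fun j => ‖y j‖^2)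
        (fun j _ => sq_nonneg _) (Finset.mem_univ i)

lemma euclid_le_of_bound {n : ℕ} (y : EuclideanSpace ℝ (Fin n)) (B : ℝ) (hB : 0 ≤ B)
    (h : ∀ i, |y i| ≤ B) : ‖y‖ ≤ Real.sqrt n * B := by
  rw [EuclideanSpace.norm_eq]
  have h1 : ∑ i, ‖y i‖^2 ≤ n * B^2 := by
    calc ∑ i, ‖y i‖^2 ≤ ∑ _i : Fin n, B^2 := Finset.sum_le_sum fun i _ => by
          rw [Real.norm_eq_abs]
          exact pow_le_pow_left₀ (abs_nonneg _) (h i) 2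
      _ = n * B^2 := by simp [Finset.sum_const, nsmul_eq_mul]
  calc Real.sqrt (∑ i, ‖y i‖^2) ≤ Real.sqrt (n * B^2) := Real.sqrt_le_sqrt h1
    _ = Real.sqrt n * B := by
        rw [Real.sqrt_mul (by positivity), Real.sqrt_sq hB]

/-- over a connected undirected graph, if `β δ λ < 1` for every nonzero
eigenvalue `λ` of `L`, then the one-step-delay difference equation
`p(k+1) = p(k) + δ H p(k-1)` is exponentially stable. -/
theorem statement7 {N : ℕ} (hN : 2 ≤ N)
    (A L : Matrix (Fin N) (Fin N) ℝ)
    (hA : IsAdjacencyMatrix A) (hL : IsOutLaplacian A L)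
    (hSym : Aᵀ = A)
    (hConn : ∀ i j : Fin N, i ≠ j → Relation.TransGen (fun u v => 0 < A u v) i j)
    (β δ : ℝ) (hβ : 0 < β) (hδ : 0 < δ)
    (hβδ : ∀ lam ∈ spectrum ℝ L, lam ≠ 0 → β * δ * lam < 1)
    (R : Matrix (Fin N) (Fin (N-1)) ℝ)
    (hR1 : Rᵀ * R = 1) (hR2 : Rᵀ.mulVec (fun _ => (1:ℝ)) = 0)
    (H : Matrix (Fin (N-1)) (Fin (N-1)) ℝ) (hH : H = -β • (Rᵀ * L * R)) :
    DDExpStable (δ • H) 1 := by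
  classical
  have hn1 : 1 ≤ N - 1 := by omega
  haveI : Nonempty (Fin (N-1)) := ⟨⟨0, by omega⟩⟩
  have hsymA : ∀ i j, A i j = A j i := fun i j => (congrFun (congrFun hSym i) j).symm
  have hLsym : Lᵀ = L := by
    ext i j
    rw [transpose_apply, lap_entry hA hL j i, lap_entry hA hL i j]
    by_cases h : i = j
    · subst h; rfl
    · simp [h, Ne.symm h, hsymA i j]
  set G : Matrix (Fin (N-1)) (Fin (N-1)) ℝ := Rᵀ * L * R with hG
  have hGsym : Gᵀ = G := by
    rw [hG, transpose_mul, transpose_mul, transpose_transpose, hLsym, ← Matrix.mul_assoc]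
  set S : Matrix (Fin (N-1)) (Fin (N-1)) ℝ := δ • H with hS
  have hSsym : Sᵀ = S := by rw [hS, transpose_smul, hH, transpose_smul, hGsym]
  set C : Matrix (Fin (N-1) ⊕ Fin (N-1)) (Fin (N-1) ⊕ Fin (N-1)) ℝ := fromBlocks 1 S 1 0
    with hC
  set Cc : Matrix (Fin (N-1) ⊕ Fin (N-1)) (Fin (N-1) ⊕ Fin (N-1)) ℂ := C.map Complex.ofReal
    with hCc
  have hspec : ∀ z ∈ spectrum ℂ Cc, ‖z‖ < 1 := by
    intro z hz
    rw [spectrum.mem_iff] at hz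
    have hdet : (algebraMap ℂ (Matrix (Fin (N-1) ⊕ Fin (N-1)) (Fin (N-1) ⊕ Fin (N-1)) ℂ) z
        - Cc).det = 0 := by
      by_contra hd
      exact hz ((Matrix.isUnit_iff_isUnit_det _).mpr (isUnit_iff_ne_zero.mpr hd))
    obtain ⟨v, hvne, hv0⟩ := (Matrix.exists_mulVec_eq_zero_iff).mpr hdet
    have heig : Cc *ᵥ v = z • v := by
      have h1 : (algebraMap ℂ (Matrix (Fin (N-1) ⊕ Fin (N-1)) (Fin (N-1) ⊕ Fin (N-1)) ℂ) z)
          *ᵥ v = z • v := by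
        rw [Algebra.algebraMap_eq_smul_one, smul_mulVec, one_mulVec]
      rw [sub_mulVec, h1] at hv0
      exact (sub_eq_zero.mp hv0).symm
    set u : Fin (N-1) → ℂ := fun i => v (Sum.inl i) with hu
    set w : Fin (N-1) → ℂ := fun i => v (Sum.inr i) with hw
    have hvelim : v = Sum.elim u w := by funext q; cases q <;> rfl
    have hCcblocks : Cc = fromBlocks 1 (S.map Complex.ofReal) 1 0 := by
      rw [hCc, hC, fromBlocks_map]
      rw [Matrix.map_one _ Complex.ofReal_zero Complex.ofReal_one,
        Matrix.map_zero _ Complex.ofReal_zero]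
    have hmv := heig
    rw [hvelim, hCcblocks, fromBlocks_mulVec] at hmv
    have heq1 : ∀ i, u i + ((S.map Complex.ofReal) *ᵥ w) i = z * u i := by
      intro i
      have := congrFun hmv (Sum.inl i)
      simpa [one_mulVec] using this
    have heq2 : ∀ i, u i = z * w i := by
      intro i
      have := congrFun hmv (Sum.inr i)
      simpa [one_mulVec] using this
    have hwne : w ≠ 0 := by
      intro h0
      apply hvne
      rw [hvelim, h0]
      funext q
      cases q with
      | inl i =>
        have := heq2 i
        rw [h0] at this
        simp only [Pi.zero_apply, mul_zero] at this
        simpa using this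
      | inr i => rfl
    have heigw : (S.map Complex.ofReal) *ᵥ w = (z^2 - z) • w := by
      funext i
      have h1 := heq1 i
      rw [heq2 i] at h1
      simp only [Pi.smul_apply, smul_eq_mul]
      linear_combination h1
    obtain ⟨him, w', hw'ne, hw'⟩ := herm_eig_real S hSsym (z^2 - z) w hwne heigw
    set m := (z^2 - z).re with hm
    have hδβne : δ * -β ≠ 0 := by
      have := mul_pos hδ hβ
      intro h0
      nlinarith
    have hGw' : G *ᵥ w' = ((δ * -β)⁻¹ * m) • w' := by
      have h1 : S *ᵥ w' = (δ * -β) • (G *ᵥ w') := by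
        rw [hS, hH, smul_mulVec, smul_mulVec, smul_smul]
      rw [h1] at hw'
      have := congrArg (fun y => (δ * -β)⁻¹ • y) hw'
      simp only [smul_smul, inv_mul_cancel₀ hδβne, one_smul] at this
      exact this
    set ν : ℝ := (δ * -β)⁻¹ * m with hν
    obtain ⟨hνspec, hνpos⟩ := eig_transfer hN hA hL hSym hConn R hR1 hR2 ν w' hw'ne hGw'
    have hlt := hβδ ν hνspec (ne_of_gt hνpos)
    have hmval : m = -(δ*β*ν) := by
      rw [hν]
      field_simp
    have hm1 : -1 < m := by rw [hmval]; nlinarith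
    have hm0 : m < 0 := by
      rw [hmval]
      have : 0 < δ * β * ν := by positivity
      linarith
    have hzq : z^2 - z = (m : ℂ) := by
      apply Complex.ext
      · simp [hm]
      · simpa using him
    exact quad_root_abs hm1 hm0 hzq
  obtain ⟨c, hc, ω, hω, hbound⟩ := pow_bound Cc hspec
  have hmapk : ∀ k : ℕ, (C ^ k).map Complex.ofReal = Cc ^ k := by
    intro k
    induction k with
    | zero =>
      rw [pow_zero, pow_zero]
      exact Matrix.map_one _ Complex.ofReal_zero Complex.ofReal_one
    | succ k ih =>
      rw [pow_succ, pow_succ, ← ih, hCc]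
      exact Matrix.map_mul (f := Complex.ofRealHom)
  have hent : ∀ (k : ℕ) p q, |(C ^ k) p q| ≤ c * ω ^ k := by
    intro k p q
    have h1 := hbound k p q
    rw [← hmapk k] at h1
    simpa [Matrix.map_apply, Complex.norm_real, Real.norm_eq_abs] using h1
  -- final constant
  have hNR : (0:ℝ) < (N - 1 : ℕ) := by
    have : 0 < N - 1 := hn1
    exact_mod_cast this
  have hcpos' : 0 < c * (2 * ((N - 1 : ℕ):ℝ)) * Real.sqrt (N - 1 : ℕ) :=
    mul_pos (mul_pos hc (by nlinarith)) (Real.sqrt_pos.mpr hNR)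
  refine ⟨c * (2 * (N - 1 : ℕ)) * Real.sqrt (N - 1 : ℕ), hcpos', ω, hω, ?_⟩
  intro x hx k hk
  set mx := (Finset.Icc (-((1:ℕ):ℤ)) 0).sup'
    (Finset.nonempty_Icc.mpr (by omega)) (fun j => ‖x j‖) with hmx
  have hmem0 : (0:ℤ) ∈ Finset.Icc (-((1:ℕ):ℤ)) 0 := by
    simp [Finset.mem_Icc]
  have hmem1 : (-1:ℤ) ∈ Finset.Icc (-((1:ℕ):ℤ)) 0 := by
    simp [Finset.mem_Icc]
  have hmx0 : ‖x 0‖ ≤ mx := Finset.le_sup' (fun j => ‖x j‖) hmem0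
  have hmx1 : ‖x (-1)‖ ≤ mx := Finset.le_sup' (fun j => ‖x j‖) hmem1
  have hmxnn : 0 ≤ mx := le_trans (norm_nonneg _) hmx0
  set v0 : Fin (N-1) ⊕ Fin (N-1) → ℝ := Sum.elim (fun i => x 0 i) (fun i => x (-1) i)
    with hv0
  have hELcomp : ∀ (y : EuclideanSpace ℝ (Fin (N-1))) i,
      (Matrix.toEuclideanLin S y) i = (S *ᵥ (fun j => y j)) i := fun y i => rfl
  have hprop : ∀ kn : ℕ, (∀ i, x (kn:ℤ) i = ((C ^ kn) *ᵥ v0) (Sum.inl i))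
      ∧ (∀ i, x ((kn:ℤ) - 1) i = ((C ^ kn) *ᵥ v0) (Sum.inr i)) := by
    intro kn
    induction kn with
    | zero =>
      rw [pow_zero, one_mulVec]
      constructor
      · intro i; simp [hv0]
      · intro i; norm_num [hv0]
    | succ kn ih =>
      have hrec := hx (kn:ℤ) (Int.natCast_nonneg kn)
      push_cast at hrec
      have hsplit : (C ^ (kn+1)) *ᵥ v0 = C *ᵥ ((C ^ kn) *ᵥ v0) := by
        rw [mulVec_mulVec, ← pow_succ']
      have hyelim : (C ^ kn) *ᵥ v0
          = Sum.elim (fun i => x (kn:ℤ) i) (fun i => x ((kn:ℤ)-1) i) := by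
        funext q
        cases q with
        | inl i => exact (ih.1 i).symm
        | inr i => exact (ih.2 i).symm
      constructor
      · intro i
        rw [hsplit, hyelim, hC, fromBlocks_mulVec]
        have hx1 : x ((kn:ℤ) + 1) i = x (kn:ℤ) i
            + (S *ᵥ (fun j => x ((kn:ℤ)-1) j)) i := by
          rw [hrec]
          have : (x (kn:ℤ) + Matrix.toEuclideanLin S (x ((kn:ℤ) - 1))) i
              = x (kn:ℤ) i + (Matrix.toEuclideanLin S (x ((kn:ℤ) - 1))) i := rfl
          rw [this, hELcomp]
        have hcast : ((kn+1 : ℕ) : ℤ) = (kn:ℤ) + 1 := by push_cast; ring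
        rw [hcast, hx1]
        simp [one_mulVec]
      · intro i
        rw [hsplit, hyelim, hC, fromBlocks_mulVec]
        have hcast : ((kn+1 : ℕ) : ℤ) - 1 = (kn:ℤ) := by push_cast; ring
        rw [hcast]
        simp [one_mulVec]
  -- now the bound
  set kn := k.toNat with hkn
  have hkeq : (kn:ℤ) = k := Int.toNat_of_nonneg hk
  have hcomp : ∀ i, |x k i| ≤ ((N-1:ℕ) + (N-1:ℕ)) * (c * ω ^ kn * mx) := by
    intro i
    rw [← hkeq, (hprop kn).1 i]
    have h1 : ((C ^ kn) *ᵥ v0) (Sum.inl i) = ∑ q, (C ^ kn) (Sum.inl i) q * v0 q := rfl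
    rw [h1]
    have h2 : ∀ q, |(C ^ kn) (Sum.inl i) q * v0 q| ≤ (c * ω ^ kn) * mx := by
      intro q
      rw [abs_mul]
      have hv0q : |v0 q| ≤ mx := by
        cases q with
        | inl j => exact le_trans (abs_le_euclid (x 0) j) hmx0
        | inr j => exact le_trans (abs_le_euclid (x (-1)) j) hmx1
      exact mul_le_mul (hent kn _ q) hv0q (abs_nonneg _)
        (mul_pos hc (pow_pos hω.1 kn)).le
    calc |∑ q, (C ^ kn) (Sum.inl i) q * v0 q| ≤ ∑ q, |(C ^ kn) (Sum.inl i) q * v0 q| :=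
          Finset.abs_sum_le_sum_abs _ _
      _ ≤ ∑ _q : Fin (N-1) ⊕ Fin (N-1), (c * ω ^ kn) * mx := Finset.sum_le_sum fun q _ => h2 q
      _ = ((N-1:ℕ) + (N-1:ℕ)) * (c * ω ^ kn * mx) := by
          rw [Finset.sum_const, Finset.card_univ, Fintype.card_sum, Fintype.card_fin,
            nsmul_eq_mul]
          push_cast
          ring
  have hnormb : ‖x k‖ ≤ Real.sqrt (N-1:ℕ) * (((N-1:ℕ) + (N-1:ℕ)) * (c * ω ^ kn * mx)) :=
    euclid_le_of_bound (x k) _ (mul_nonneg (by positivity)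
      (mul_nonneg (mul_pos hc (pow_pos hω.1 kn)).le hmxnn)) hcomp
  calc ‖x k‖ ≤ Real.sqrt (N-1:ℕ) * (((N-1:ℕ) + (N-1:ℕ)) * (c * ω ^ kn * mx)) := hnormb
    _ = c * (2 * (N - 1 : ℕ)) * Real.sqrt (N-1:ℕ) * ω ^ kn * mx := by ring
    _ = c * (2 * (N - 1 : ℕ)) * Real.sqrt (N-1:ℕ) * ω ^ k * mx := by
        rw [← hkeq, zpow_natCast]
end

section
/- Let L be the out-Laplacian of an SCWB digraph on N ≥ 2 nodes, let β > 0, 0 < δ < 1/(β 𝖽ᵐᵃˣ), d ∈ ℤ_{≥0}, and set H = −β Rᵀ L R ∈ ℝ^{(N−1)×(N−1)}. Suppose there exist k̄ > 0 and ω ∈ (0,1) such that the delayed matrix exponential satisfies ‖e_d^{δH·(k−d)}‖ ≤ k̄ ω^k for all integers k ≥ 0. Let r ∈ ℝ^N be a constant vector, extended to 𝗋(k) = r for k ≥ 0 and 𝗋(k) = 0 for k < 0, and let z : {k ∈ ℤ : k ≥ −d} → ℝ^N satisfy z(k) = 0 for −d ≤ k ≤ −1, 1_Nᵀ z(0) =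 0, and z(k+1) = z(k) − δ β L x(k−d) for all k ≥ 0, where x(k) = z(k) + 𝗋(k). Set r̄ = (1/N) Σ_{j=1}^N r_j. Then ‖x(k) − r̄ 1_N‖ ≤ k̄ ω^k ‖x(0) − r̄ 1_N‖ for all k ≥ 0; in particular every component x_i(k) converges exponentially to the exact average r̄ as k → ∞. -/
open Matrix Filter

/-- The delayed matrix exponential `e_d^{A k}`: zero for `k < -d`, and for `k ≥ -d` equal to
`∑_{l=0}^{m_k} C(k-(l-1)d, l) Aˡ` with `m_k = max(⌈k/(d+1)⌉, 0)`. -/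
noncomputable def delayExp {n : ℕ} (A : Matrix (Fin n) (Fin n) ℝ) (d : ℕ) (k : ℤ) :
    Matrix (Fin n) (Fin n) ℝ :=
  if k < -(d:ℤ) then 0
  else ∑ l ∈ Finset.range ((max (⌈(k : ℚ) / ((d : ℚ) + 1)⌉) 0).toNat + 1),
    (((k - ((l : ℤ) - 1) * (d : ℤ)).toNat.choose l : ℝ)) • A ^ l

section Helpers

private lemma choose_vanish (d : ℕ) (k : ℤ) {l : ℕ}
    (hl : (max (⌈(k : ℚ) / ((d : ℚ) + 1)⌉) 0).toNat + 1 ≤ l) :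
    (k - ((l : ℤ) - 1) * (d : ℤ)).toNat.choose l = 0 := by
  apply Nat.choose_eq_zero_of_lt
  have hl0 : l ≠ 0 := by omega
  rw [Int.toNat_lt' (Nat.pos_of_ne_zero hl0)]
  have h1 : ⌈(k : ℚ) / ((d : ℚ) + 1)⌉ ≤ (l : ℤ) - 1 := by
    have := Int.le_max_left ⌈(k:ℚ)/((d:ℚ)+1)⌉ (0:ℤ)
    omega
  rw [Int.ceil_le] at h1
  have hd : (0:ℚ) < (d:ℚ) + 1 := by positivity
  rw [div_le_iff₀ hd] at h1
  have h2 : (k:ℚ) ≤ ((l:ℚ) - 1) * ((d:ℚ) + 1) := by push_cast at h1 ⊢; linarith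
  have h3 : (k:ℤ) ≤ ((l:ℤ) - 1) * ((d:ℤ) + 1) := by exact_mod_cast h2
  nlinarith [h3]

private lemma delayExp_eq_sum {n : ℕ} (A : Matrix (Fin n) (Fin n) ℝ) (d : ℕ) (k : ℤ)
    (hk : -(d:ℤ) ≤ k) (M : ℕ)
    (hM : (max (⌈(k : ℚ) / ((d : ℚ) + 1)⌉) 0).toNat + 1 ≤ M) :
    delayExp A d k = ∑ l ∈ Finset.range M,
      (((k - ((l : ℤ) - 1) * (d : ℤ)).toNat.choose l : ℝ)) • A ^ l := by
  rw [delayExp, if_neg (by omega)]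
  refine Finset.sum_subset (Finset.range_subset_range.2 hM) (fun l _ hl => ?_)
  rw [Finset.mem_range, not_lt] at hl
  rw [choose_vanish d k hl]
  simp

private lemma delayExp_id {n : ℕ} (A : Matrix (Fin n) (Fin n) ℝ) (d : ℕ) (k : ℤ)
    (hk1 : -(d:ℤ) ≤ k) (hk2 : k ≤ 0) : delayExp A d k = 1 := by
  have hc : ⌈(k : ℚ) / ((d : ℚ) + 1)⌉ ≤ 0 := by
    rw [Int.ceil_le]
    push_cast
    apply div_nonpos_of_nonpos_of_nonneg
    · exact_mod_cast hk2
    · positivity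
  rw [delayExp_eq_sum A d k hk1 1 (by omega)]
  simp

private lemma delayExp_rec {n : ℕ} (A : Matrix (Fin n) (Fin n) ℝ) (d : ℕ) (k : ℤ)
    (hk : 0 ≤ k) :
    delayExp A d (k + 1) = delayExp A d k + A * delayExp A d (k - d) := by
  set c : ℤ → ℕ → ℝ := fun j l => (((j - ((l : ℤ) - 1) * (d : ℤ)).toNat.choose l : ℝ)) with hc
  set m1 := (max (⌈((k + 1 : ℤ) : ℚ) / ((d : ℚ) + 1)⌉) 0).toNat
  set m2 := (max (⌈(k : ℚ) / ((d : ℚ) + 1)⌉) 0).toNat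
  set m3 := (max (⌈((k - (d:ℤ) : ℤ) : ℚ) / ((d : ℚ) + 1)⌉) 0).toNat
  set M := m1 + m2 + m3 + 1 with hM
  have pascal : ∀ l : ℕ, c (k + 1) (l + 1) = c k (l + 1) + c (k - d) l := by
    intro l
    have e1 : (k + 1) - (((l:ℤ) + 1) - 1) * (d:ℤ) = (k - (l:ℤ) * d) + 1 := by push_cast; ring
    have e2 : k - (((l:ℤ) + 1) - 1) * (d:ℤ) = k - (l:ℤ) * d := by ring
    have e3 : (k - (d:ℤ)) - ((l:ℤ) - 1) * (d:ℤ) = k - (l:ℤ) * d := by ring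
    simp only [hc]
    push_cast [e1, e2, e3]
    set nn : ℤ := k - (l:ℤ) * d with hnn
    rcases le_or_gt 0 nn with h | h
    · have : (nn + 1).toNat = nn.toNat + 1 := by omega
      rw [this]
      rw [Nat.choose_succ_succ]
      push_cast; ring
    · have hl : 1 ≤ l := by
        by_contra hl
        have : l = 0 := by omega
        subst this
        simp at hnn
        omega
      have h1 : (nn + 1).toNat = 0 := by omega
      have h2 : nn.toNat = 0 := by omega
      rw [h1, h2]
      simp [Nat.choose_eq_zero_of_lt (show 0 < l by omega),
        Nat.choose_eq_zero_of_lt (show 0 < l + 1 by omega)]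
  rw [delayExp_eq_sum A d (k + 1) (by omega) (M + 1) (by omega),
    delayExp_eq_sum A d k (by omega) (M + 1) (by omega),
    delayExp_eq_sum A d (k - d) (by omega) M (by omega)]
  rw [Finset.sum_range_succ' (fun l => c (k+1) l • A ^ l) M,
    Finset.sum_range_succ' (fun l => c k l • A ^ l) M, Finset.mul_sum]
  have h0 : c (k + 1) 0 = c k 0 := by
    simp only [hc]
    norm_num
  simp only [h0]
  have hterm : ∀ l : ℕ, c (k+1) (l+1) • A ^ (l+1)
      = c k (l+1) • A ^ (l+1) + A * (c (k - d) l • A ^ l) := by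
    intro l
    rw [pascal l, add_smul, mul_smul_comm, ← pow_succ']
  simp only [hterm]
  rw [Finset.sum_add_distrib]
  abel

private lemma Rnorm {N M : ℕ} (R : Matrix (Fin N) (Fin M) ℝ) (hR1 : Rᵀ * R = 1)
    (w : Fin M → ℝ) : ∑ i, (R.mulVec w i)^2 = ∑ j, (w j)^2 := by
  have h : (R.mulVec w) ⬝ᵥ (R.mulVec w) = w ⬝ᵥ w := by
    rw [dotProduct_mulVec, ← Matrix.mulVec_transpose, Matrix.mulVec_mulVec, hR1,
      Matrix.one_mulVec]
  simpa [dotProduct, sq] using h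

private lemma norm_of_mulVec {N M : ℕ} (R : Matrix (Fin N) (Fin M) ℝ) (hR1 : Rᵀ * R = 1)
    (w : EuclideanSpace ℝ (Fin M)) (v : EuclideanSpace ℝ (Fin N))
    (hv : ∀ i, v i = R.mulVec w i) : ‖v‖ = ‖w‖ := by
  rw [EuclideanSpace.norm_eq, EuclideanSpace.norm_eq]
  congr 1
  simp only [Real.norm_eq_abs, sq_abs, hv]
  exact Rnorm R hR1 w

private lemma proj_fix {N : ℕ} (hN : 1 ≤ N) (R : Matrix (Fin N) (Fin (N-1)) ℝ)
    (hR1 : Rᵀ * R = 1) (hR2 : Rᵀ.mulVec (fun _ => (1:ℝ)) = 0)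
    (v : Fin N → ℝ) (hv : ∑ i, v i = 0) :
    R.mulVec (Rᵀ.mulVec v) = v := by
  classical
  have hN0 : (0:ℝ) < (N:ℝ) := by exact_mod_cast Nat.pos_of_ne_zero (by omega)
  set s : ℝ := Real.sqrt N with hs
  have hs0 : 0 < s := Real.sqrt_pos.2 hN0
  have hss : s * s = N := Real.mul_self_sqrt (le_of_lt hN0)
  set Q : Matrix (Fin N) (Unit ⊕ Fin (N-1)) ℝ :=
    fun i t => Sum.elim (fun _ => 1 / s) (fun j => R i j) t with hQ
  have hcol : ∀ j, ∑ i, R i j = 0 := by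
    intro j
    have := congrFun hR2 j
    simpa [Matrix.mulVec, dotProduct, Matrix.transpose_apply] using this
  have h1 : Qᵀ * Q = 1 := by
    ext t t'
    rcases t with _ | j <;> rcases t' with _ | j'
    · simp only [Matrix.mul_apply, Matrix.transpose_apply]
      simp only [Matrix.mul_apply, Matrix.transpose_apply, hQ, Sum.elim_inl,
        Matrix.one_apply_eq]
      rw [Finset.sum_const, Finset.card_univ, Fintype.card_fin, nsmul_eq_mul]
      field_simp
      linarith
    · have h' := hcol j'
      simp only [Matrix.mul_apply, Matrix.transpose_apply]
      simp only [Matrix.mul_apply, Matrix.transpose_apply, hQ, Sum.elim_inl, Sum.elim_inr]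
      have h'' : ∑ x : Fin N, 1 / s * R x j' = 0 := by rw [← Finset.mul_sum, h', mul_zero]
      rw [h'']
      simp [Matrix.one_apply]
    · have h' := hcol j
      simp only [Matrix.mul_apply, Matrix.transpose_apply]
      simp only [Matrix.mul_apply, Matrix.transpose_apply, hQ, Sum.elim_inl, Sum.elim_inr]
      have h'' : ∑ x : Fin N, R x j * (1 / s) = 0 := by rw [← Finset.sum_mul, h', zero_mul]
      rw [h'']
      simp [Matrix.one_apply]
    · have h' := congrFun (congrFun hR1 j) j'
      simp only [Matrix.mul_apply, Matrix.transpose_apply] at h'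
      simp only [Matrix.mul_apply, Matrix.transpose_apply]
      simp [Matrix.mul_apply, hQ, Matrix.one_apply, h']
  have hcard : Fintype.card (Fin N) = Fintype.card (Unit ⊕ Fin (N-1)) := by
    simp; omega
  set e : Fin N ≃ (Unit ⊕ Fin (N-1)) := Fintype.equivOfCardEq hcard with he
  have h2 : (Qᵀ.submatrix e id) * (Q.submatrix id e) = 1 := by
    rw [show (Qᵀ.submatrix ⇑e id) = Qᵀ.submatrix ⇑e (⇑(Equiv.refl (Fin N))) from rfl,
      show (Q.submatrix id ⇑e) = Q.submatrix (⇑(Equiv.refl (Fin N))) ⇑e from rfl,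
      Matrix.submatrix_mul_equiv, h1, Matrix.submatrix_one_equiv]
  have h3 : (Q.submatrix id e) * (Qᵀ.submatrix e id) = 1 := mul_eq_one_comm.2 h2
  have h4 : Q * Qᵀ = 1 := by
    rw [show Q * Qᵀ = (Q.submatrix (⇑(Equiv.refl (Fin N))) ⇑e.symm.symm)
        * (Qᵀ.submatrix (⇑e.symm.symm) (⇑(Equiv.refl (Fin N)))) from ?_]
    · rw [Matrix.submatrix_mul_equiv]
      have := h3
      simpa using this
    · simp
  have h5 : Q.mulVec (Qᵀ.mulVec v) = v := by
    rw [Matrix.mulVec_mulVec, h4, Matrix.one_mulVec]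
  have h6 : Qᵀ.mulVec v = Sum.elim (fun _ => (0:ℝ)) (Rᵀ.mulVec v) := by
    funext t
    rcases t with _ | j
    · simp only [Matrix.mulVec, dotProduct, Matrix.transpose_apply]
      simp only [Matrix.mulVec, dotProduct, Matrix.transpose_apply, hQ, Sum.elim_inl,
        one_div]
      rw [← Finset.mul_sum, hv, mul_zero]
    · simp only [Matrix.mulVec, dotProduct, Matrix.transpose_apply]
      simp [Matrix.mulVec, dotProduct, hQ]
  rw [h6] at h5
  funext i
  rw [← congrFun h5 i]
  simp [Matrix.mulVec, dotProduct, hQ, Fintype.sum_sum_type]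

end Helpers

/-- for static reference signals, the discrete-time dynamic average consensus
algorithm with admissible communication delay `d` converges exponentially (geometrically)
to the exact average. -/
theorem statement16 {N : ℕ} (hN : 2 ≤ N)
    (A L : Matrix (Fin N) (Fin N) ℝ)
    (hA : IsAdjacencyMatrix A) (hL : IsOutLaplacian A L)
    (hSC : IsStronglyConnected A) (hWB : IsWeightBalanced L)
    (β δ : ℝ) (hβ : 0 < β)
    (dmax : ℝ) (hdmax : IsGreatest (Set.range fun i => ∑ j, A i j) dmax)
    (hδ0 : 0 < δ) (hδ1 : δ < 1 / (β * dmax))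
    (d : ℕ)
    (R : Matrix (Fin N) (Fin (N-1)) ℝ)
    (hR1 : Rᵀ * R = 1) (hR2 : Rᵀ.mulVec (fun _ => (1:ℝ)) = 0)
    (H : Matrix (Fin (N-1)) (Fin (N-1)) ℝ) (hH : H = -β • (Rᵀ * L * R))
    (kbar ω : ℝ) (hkbar : 0 < kbar) (hω : ω ∈ Set.Ioo (0:ℝ) 1)
    (hdecay : ∀ k : ℤ, 0 ≤ k →
      ‖Matrix.toEuclideanCLM (𝕜 := ℝ) (delayExp (δ • H) d (k - d))‖ ≤ kbar * ω ^ k)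
    (r : EuclideanSpace ℝ (Fin N))
    (rsig : ℤ → EuclideanSpace ℝ (Fin N))
    (hrsig : ∀ k : ℤ, rsig k = if 0 ≤ k then r else 0)
    (z : ℤ → EuclideanSpace ℝ (Fin N))
    (hzneg : ∀ k : ℤ, -(d:ℤ) ≤ k → k ≤ -1 → z k = 0)
    (hz0 : ∑ i, z 0 i = 0)
    (x : ℤ → EuclideanSpace ℝ (Fin N)) (hx : ∀ k, x k = z k + rsig k)
    (hrec : ∀ k : ℤ, 0 ≤ k →
      z (k + 1) = z k - (δ * β) • Matrix.toEuclideanLin L (x (k - d))) :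
    (∀ k : ℤ, 0 ≤ k →
      ‖x k - avg r • ones N‖ ≤ kbar * ω ^ k * ‖x 0 - avg r • ones N‖) ∧
    ∀ i : Fin N,
      Filter.Tendsto (fun k : ℤ => x k i) Filter.atTop (nhds (avg r)) := by
  classical
  obtain ⟨hω0, hω1⟩ := hω
  have hN1 : 1 ≤ N := by omega
  have hNR : (0:ℝ) < (N:ℝ) := by exact_mod_cast (by omega : 0 < N)
  set rb := avg r with hrb
  set Y : ℤ → (Fin N → ℝ) := fun k i => x k i - rb with hY
  have hyapp : ∀ (k : ℤ), (fun i => (x k - rb • ones N) i) = Y k := by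
    intro k
    funext i
    simp [hY, PiLp.sub_apply, PiLp.smul_apply, ones]
  -- row sums of L vanish
  have hrow : ∀ i, ∑ j, L i j = 0 := by
    intro i
    rw [← Finset.add_sum_erase Finset.univ _ (Finset.mem_univ i), hL.1 i,
      ← Finset.add_sum_erase Finset.univ (A i) (Finset.mem_univ i), hA.2 i, zero_add]
    have h' : ∑ j ∈ Finset.univ.erase i, L i j = ∑ j ∈ Finset.univ.erase i, -A i j :=
      Finset.sum_congr rfl fun j hj => hL.2 i j (Finset.ne_of_mem_erase hj).symm
    rw [h', Finset.sum_neg_distrib, add_neg_cancel]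
  have hLconst : ∀ c : ℝ, L.mulVec (fun _ => c) = 0 := by
    intro c
    funext i
    simp only [Matrix.mulVec, dotProduct]
    rw [← Finset.sum_mul, hrow, zero_mul]
    rfl
  have hLsum : ∀ v : Fin N → ℝ, ∑ i, (L.mulVec v) i = 0 := by
    intro v
    simp only [Matrix.mulVec, dotProduct]
    rw [Finset.sum_comm]
    refine Finset.sum_eq_zero fun j _ => ?_
    rw [← Finset.sum_mul, hWB j, zero_mul]
  -- initial condition
  have hx0i : ∀ i, x 0 i = z 0 i + r i := by
    intro i
    rw [hx 0, hrsig 0, if_pos le_rfl]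
    simp [PiLp.add_apply]
  have hsum0 : ∑ i, Y 0 i = 0 := by
    simp only [hY]
    rw [Finset.sum_sub_distrib]
    have h1 : ∑ i, x 0 i = ∑ i, r i := by
      simp only [hx0i]
      rw [Finset.sum_add_distrib, hz0, zero_add]
    rw [h1, Finset.sum_const, Finset.card_univ, Fintype.card_fin, nsmul_eq_mul, hrb, avg]
    field_simp
    ring
  set w0 : Fin (N-1) → ℝ := Rᵀ.mulVec (Y 0) with hw0
  have hy0R : Y 0 = R.mulVec w0 := (proj_fix hN1 R hR1 hR2 (Y 0) hsum0).symm
  -- the key formula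
  have key : ∀ n : ℕ, ∀ k : ℤ, 0 ≤ k → k ≤ (n:ℤ) →
      Y k = R.mulVec ((delayExp (δ • H) d (k - d)).mulVec w0) := by
    intro n
    induction n with
    | zero =>
      intro k hk0 hk1
      have hk : k = 0 := le_antisymm (by exact_mod_cast hk1) hk0
      subst hk
      rw [delayExp_id _ d _ (by omega) (by omega), Matrix.one_mulVec]
      exact hy0R
    | succ n ih =>
      intro k hk0 hk1
      by_cases hkn : k ≤ (n:ℤ)
      · exact ih k hk0 hkn
      have hk : k = (n:ℤ) + 1 := by push_cast at hk1; omega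
      subst hk
      set m : ℤ := (n:ℤ) with hm
      have hm0 : 0 ≤ m := Int.natCast_nonneg n
      -- the recursion at the coordinate level
      have hrr : rsig (m + 1) = r := by rw [hrsig]; exact if_pos (by omega)
      have hrm : rsig m = r := by rw [hrsig]; exact if_pos hm0
      have hxm : Y (m + 1) = Y m - (δ * β) • (L.mulVec (fun j => x (m - d) j)) := by
        funext i
        have hz' := congrArg (fun v : EuclideanSpace ℝ (Fin N) => v i) (hrec m hm0)
        simp only at hz'
        have hx1 : x (m + 1) i = z (m + 1) i + r i := by
          rw [hx (m + 1), hrr]; simp [PiLp.add_apply]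
        have hx2 : x m i = z m i + r i := by
          rw [hx m, hrm]; simp [PiLp.add_apply]
        have hz'' : z (m + 1) i = z m i
            - (δ * β) * (L.mulVec (fun j => x (m - d) j)) i := by
          rw [hz', PiLp.sub_apply, PiLp.smul_apply, smul_eq_mul]
          rfl
        simp only [hY, Pi.sub_apply, Pi.smul_apply, smul_eq_mul]
        rw [hx1, hx2, hz'']
        ring
      by_cases hmd : m < d
      · -- delayed state is zero
        have hx0 : x (m - d) = 0 := by
          rw [hx (m - d), hrsig (m - d), if_neg (by omega), hzneg (m - d) (by omega) (by omega)]
          simp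
        have hL0 : L.mulVec (fun j => x (m - d) j) = 0 := by
          rw [show (fun j => x (m - d) j) = (0 : Fin N → ℝ) by rw [hx0]; funext j; simp]
          exact Matrix.mulVec_zero L
        have hstep : Y (m + 1) = Y m := by rw [hxm, hL0]; simp
        rw [hstep, ih m hm0 le_rfl,
          delayExp_id (δ • H) d (m + 1 - d) (by omega) (by omega),
          delayExp_id (δ • H) d (m - d) (by omega) (by omega)]
      · -- main step
        have hdm : (d:ℤ) ≤ m := by omega
        have ihm := ih m hm0 le_rfl
        have ihmd := ih (m - d) (by omega) (by omega)
        set u : Fin (N-1) → ℝ := (delayExp (δ • H) d (m - d - d)).mulVec w0 with hu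
        have hxd : (fun j => x (m - d) j) = (fun j => Y (m - d) j) + (fun _ => rb) := by
          funext j
          have : rsig (m - d) = r := by rw [hrsig]; exact if_pos (by omega)
          simp [hY, Pi.add_apply]
        have hLx : L.mulVec (fun j => x (m - d) j) = L.mulVec (R.mulVec u) := by
          rw [hxd, Matrix.mulVec_add, hLconst rb, add_zero, ihmd]
        have hproj : R.mulVec (Rᵀ.mulVec (L.mulVec (R.mulVec u)))
            = L.mulVec (R.mulVec u) :=
          proj_fix hN1 R hR1 hR2 _ (hLsum _)
        have hde : delayExp (δ • H) d (m + 1 - d)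
            = delayExp (δ • H) d (m - d) + (δ • H) * delayExp (δ • H) d (m - d - d) := by
          have := delayExp_rec (δ • H) d (m - d) (by omega)
          rw [show m - (d:ℤ) + 1 = m + 1 - d by ring] at this
          exact this
        rw [hxm, hde, Matrix.add_mulVec, Matrix.mulVec_add, ihm, ← Matrix.mulVec_mulVec, ← hu]
        congr 1
        have hH' : δ • H = (-(δ * β)) • (Rᵀ * L * R) := by
          rw [hH, smul_smul]
          congr 1
          ring
        rw [hH', Matrix.smul_mulVec, Matrix.mulVec_smul,
          ← Matrix.mulVec_mulVec, ← Matrix.mulVec_mulVec, hproj, hLx]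
        funext i
        simp [Pi.smul_apply]
        ring
  -- the norm bound
  have habs : ∀ (v : EuclideanSpace ℝ (Fin N)) (i : Fin N), |v i| ≤ ‖v‖ := by
    intro v i
    rw [EuclideanSpace.norm_eq, ← Real.sqrt_sq_eq_abs]
    apply Real.sqrt_le_sqrt
    have : |v i| ^ 2 ≤ ∑ j, ‖v j‖ ^ 2 :=
      Finset.single_le_sum (f := fun j => ‖v j‖ ^ 2)
        (fun j _ => sq_nonneg _) (Finset.mem_univ i)
    simpa [sq_abs] using this
  set w0' : EuclideanSpace ℝ (Fin (N-1)) := (WithLp.equiv 2 _).symm w0 with hw0'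
  have hnorm0 : ‖x 0 - rb • ones N‖ = ‖w0'‖ := by
    apply norm_of_mulVec R hR1
    intro i
    rw [congrFun (hyapp 0) i]
    exact congrFun hy0R i
  have part1 : ∀ k : ℤ, 0 ≤ k →
      ‖x k - rb • ones N‖ ≤ kbar * ω ^ k * ‖x 0 - rb • ones N‖ := by
    intro k hk
    have hkey := key k.toNat k hk (by omega)
    set E := delayExp (δ • H) d (k - d) with hE
    set u : EuclideanSpace ℝ (Fin (N-1)) := (WithLp.equiv 2 _).symm (E.mulVec w0) with hu
    have h1 : ‖x k - rb • ones N‖ = ‖u‖ := by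
      apply norm_of_mulVec R hR1
      intro i
      rw [congrFun (hyapp k) i]
      exact congrFun hkey i
    have h2 : u = Matrix.toEuclideanCLM (𝕜 := ℝ) E w0' := by
      have h3 : (Matrix.toEuclideanCLM (𝕜 := ℝ) E) w0'
          = Matrix.toEuclideanLin E ((WithLp.equiv 2 _).symm w0) := by
        rw [hw0', ← Matrix.coe_toEuclideanCLM_eq_toEuclideanLin]
        rfl
      rw [h3]; rfl
    have h4 : ‖u‖ ≤ (kbar * ω ^ k) * ‖w0'‖ := by
      rw [h2]
      refine le_trans (ContinuousLinearMap.le_opNorm _ _) ?_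
      apply mul_le_mul_of_nonneg_right (hdecay k hk) (norm_nonneg _)
    rw [h1, hnorm0]
    exact h4
  refine ⟨part1, ?_⟩
  intro i
  have hzero : Tendsto (fun k : ℤ => x k i - rb) atTop (nhds 0) := by
    apply squeeze_zero_norm' (a := fun k : ℤ => kbar * ω ^ k * ‖x 0 - rb • ones N‖)
    · filter_upwards [eventually_ge_atTop (0:ℤ)] with k hk
      refine le_trans ?_ (part1 k hk)
      have h5 : x k i - rb = (x k - rb • ones N) i := by
        simp [PiLp.sub_apply, PiLp.smul_apply, ones]
      rw [Real.norm_eq_abs, h5]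
      exact habs _ i
    · have h0 : Tendsto (fun k : ℤ => ω ^ k) atTop (nhds 0) := by
        have hn : Tendsto (fun n : ℕ => ω ^ n) atTop (nhds 0) :=
          tendsto_pow_atTop_nhds_zero_of_lt_one (le_of_lt hω0) hω1
        have hto : Tendsto Int.toNat atTop atTop :=
          Filter.tendsto_atTop_atTop.2 (fun b => ⟨(b:ℤ), fun a ha => by omega⟩)
        apply (hn.comp hto).congr'
        filter_upwards [eventually_ge_atTop (0:ℤ)] with k hk
        simp only [Function.comp]
        rw [← zpow_natCast, Int.toNat_of_nonneg hk]
      have := (h0.const_mul kbar).mul_const (‖x 0 - rb • ones N‖)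
      simpa using this
  have := hzero.add_const rb
  simpa using this
end
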